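/- Let q ≥ 3 be an integer and Γ_q the Hecke triangle group in SL(2,ℝ). Let h ∈ Γ_q satisfy h • 0 > h • ∞ ≥ 0 in ℝ ∪ {∞} (with the convention r < ∞ for all r ∈ ℝ). Then there exist unique ℓ ∈ ℕ₀ and k₁, …, k_ℓ ∈ {1, …, q−1} such that h = p_{k₁} ⋯ p_{k_ℓ} · S or h = −p_{k₁} ⋯ p_{k_ℓ} · S (the empty product being the identity matrix). -/

import Mathlib

noncomputable section

open OnePoint

abbrev SL2 := Matrix.SpecialLinearGroup (Fin 2) ℝ

/-- `S = [[0,1],[−1,0]] ∈ SL(2,ℝ)`. -/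
def Smat : SL2 := ⟨!![0, 1; -1, 0], by norm_num [Matrix.det_fin_two_of]⟩

/-- `T_q = [[1, λ_q],[0,1]] ∈ SL(2,ℝ)` where `λ_q = 2cos(π/q)`. -/
def Tmat (q : ℕ) : SL2 :=
  ⟨!![1, 2 * Real.cos (Real.pi / q); 0, 1], by norm_num [Matrix.det_fin_two_of]⟩

/-- The Hecke triangle group `Γ_q ≤ SL(2,ℝ)`, generated by `S` and `T_q`. -/
def Hecke (q : ℕ) : Subgroup SL2 := Subgroup.closure {Smat, Tmat q}

/-- The matrix `p_k = (1/sin(π/q)) · [[sin(kπ/q), sin((k+1)π/q)], [sin((k−1)π/q), sin(kπ/q)]]`. -/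
def pMat (q : ℕ) (k : ℤ) : Matrix (Fin 2) (Fin 2) ℝ :=
  (Real.sin (Real.pi / q))⁻¹ •
    !![Real.sin ((k : ℝ) * Real.pi / q), Real.sin (((k : ℝ) + 1) * Real.pi / q);
       Real.sin (((k : ℝ) - 1) * Real.pi / q), Real.sin ((k : ℝ) * Real.pi / q)]

/-- The Möbius action of `SL(2,ℝ)` on `ℝ ∪ {∞}`:
`[[a,b],[c,d]] • x = (ax+b)/(cx+d)` for `x ∈ ℝ` with `cx+d ≠ 0`, `= ∞` if `cx+d = 0`;
`[[a,b],[c,d]] • ∞ = a/c` if `c ≠ 0` and `= ∞` if `c = 0`. -/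
def mob (g : SL2) (x : OnePoint ℝ) : OnePoint ℝ :=
  match x with
  | OnePoint.some r =>
      if g.1 1 0 * r + g.1 1 1 = 0 then ∞
      else (((g.1 0 0 * r + g.1 0 1) / (g.1 1 0 * r + g.1 1 1) : ℝ) : OnePoint ℝ)
  | OnePoint.infty =>
      if g.1 1 0 = 0 then ∞ else ((g.1 0 0 / g.1 1 0 : ℝ) : OnePoint ℝ)

/-- The strict order on `ℝ ∪ {∞}` extending that of `ℝ` by `r < ∞` for every `r ∈ ℝ`. -/
def opLT : OnePoint ℝ → OnePoint ℝ → Prop :=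
  fun u v =>
    match u, v with
    | OnePoint.some r, OnePoint.some s => r < s
    | OnePoint.some _, OnePoint.infty => True
    | OnePoint.infty, _ => False

/-- The order on `ℝ ∪ {∞}` extending that of `ℝ` by `r < ∞` for every `r ∈ ℝ`. -/
def opLE (u v : OnePoint ℝ) : Prop := u = v ∨ opLT u v

namespace St12

/-- `sin (x π / q)` -/
def sf (q : ℕ) (x : ℝ) : ℝ := Real.sin (x * Real.pi / q)

def SM : Matrix (Fin 2) (Fin 2) ℝ := !![0, 1; -1, 0]

def TM (q : ℕ) : Matrix (Fin 2) (Fin 2) ℝ := !![1, 2 * Real.cos (Real.pi / q); 0, 1]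

lemma Smat_coe : (Smat : Matrix (Fin 2) (Fin 2) ℝ) = SM := rfl
lemma Tmat_coe (q : ℕ) : ((Tmat q : SL2) : Matrix (Fin 2) (Fin 2) ℝ) = TM q := rfl

variable {q : ℕ}

lemma pMat_eq (k : ℤ) :
    pMat q k = (sf q 1)⁻¹ • !![sf q (k : ℝ), sf q ((k : ℝ) + 1); sf q ((k : ℝ) - 1), sf q (k : ℝ)] := by
  simp [pMat, sf]

lemma q_pos (hq : 3 ≤ q) : 0 < (q : ℝ) := by positivity

lemma sf1_pos (hq : 3 ≤ q) : 0 < sf q 1 := by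
  have hq' : 0 < (q : ℝ) := q_pos hq
  have h1 : (0:ℝ) < Real.pi / q := by positivity
  have h2 : Real.pi / q < Real.pi := by
    rw [div_lt_iff₀ hq']
    nlinarith [Real.pi_pos, show (3:ℝ) ≤ q by exact_mod_cast hq]
  simpa [sf] using Real.sin_pos_of_pos_of_lt_pi (by simpa using h1) (by simpa using h2)

lemma sf_nonneg (hq : 3 ≤ q) {x : ℝ} (h0 : 0 ≤ x) (h1 : x ≤ q) : 0 ≤ sf q x := by
  have hq' : 0 < (q : ℝ) := q_pos hq
  apply Real.sin_nonneg_of_nonneg_of_le_pi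
  · positivity
  · rw [div_le_iff₀ hq']
    nlinarith [Real.pi_pos]

lemma sf_pos (hq : 3 ≤ q) {x : ℝ} (h0 : 0 < x) (h1 : x < q) : 0 < sf q x := by
  have hq' : 0 < (q : ℝ) := q_pos hq
  apply Real.sin_pos_of_pos_of_lt_pi
  · positivity
  · rw [div_lt_iff₀ hq']
    nlinarith [Real.pi_pos]

lemma sf_zero : sf q 0 = 0 := by simp [sf]

lemma sf_q (hq : 3 ≤ q) : sf q q = 0 := by
  have hq' : (q:ℝ) ≠ 0 := ne_of_gt (q_pos hq)
  unfold sf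
  have e : (q:ℝ) * Real.pi / q = Real.pi := by field_simp
  rw [e, Real.sin_pi]

lemma sf_rec (x : ℝ) :
    sf q (x + 1) = 2 * Real.cos (Real.pi / q) * sf q x - sf q (x - 1) := by
  unfold sf
  have e1 : (x + 1) * Real.pi / q = x * Real.pi / q + Real.pi / q := by ring
  have e2 : (x - 1) * Real.pi / q = x * Real.pi / q - Real.pi / q := by ring
  rw [e1, e2, Real.sin_add, Real.sin_sub]
  ring

lemma sf_sq (x : ℝ) : sf q (x + 1) * sf q (x - 1) = sf q x ^ 2 - sf q 1 ^ 2 := by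
  unfold sf
  have e1 : (x + 1) * Real.pi / q = x * Real.pi / q + Real.pi / q := by ring
  have e2 : (x - 1) * Real.pi / q = x * Real.pi / q - Real.pi / q := by ring
  have e3 : (1:ℝ) * Real.pi / q = Real.pi / q := by ring
  rw [e1, e2, e3, Real.sin_add, Real.sin_sub]
  have h1 := Real.sin_sq_add_cos_sq (x * Real.pi / q)
  have h2 := Real.sin_sq_add_cos_sq (Real.pi / q)
  nlinarith [h1, h2]

lemma sf_q_add (hq : 3 ≤ q) (x : ℝ) : sf q ((q : ℝ) + x) = - sf q x := by
  have hq' : (q:ℝ) ≠ 0 := ne_of_gt (q_pos hq)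
  unfold sf
  have e : ((q:ℝ) + x) * Real.pi / q = Real.pi + x * Real.pi / q := by
    field_simp
  rw [e, Real.sin_add, Real.sin_pi, Real.cos_pi]; ring

lemma sf_q_sub (hq : 3 ≤ q) (x : ℝ) : sf q ((q : ℝ) - x) = sf q x := by
  have hq' : (q:ℝ) ≠ 0 := ne_of_gt (q_pos hq)
  unfold sf
  have e : ((q:ℝ) - x) * Real.pi / q = Real.pi - x * Real.pi / q := by
    field_simp
  rw [e, Real.sin_pi_sub]

lemma sf_prod (a b : ℝ) :
    2 * (sf q a * sf q b) = Real.cos ((a - b) * Real.pi / q) - Real.cos ((a + b) * Real.pi / q) := by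
  unfold sf
  have e1 : (a - b) * Real.pi / q = a * Real.pi / q - b * Real.pi / q := by ring
  have e2 : (a + b) * Real.pi / q = a * Real.pi / q + b * Real.pi / q := by ring
  rw [e1, e2, Real.cos_sub, Real.cos_add]
  ring


lemma sf_neg (x : ℝ) : sf q (-x) = - sf q x := by
  unfold sf
  rw [show -x * Real.pi / q = -(x * Real.pi / q) by ring, Real.sin_neg]

lemma sf_one : sf q 1 = Real.sin (Real.pi / q) := by unfold sf; norm_num

def TMinv (q : ℕ) : Matrix (Fin 2) (Fin 2) ℝ := !![1, -(2 * Real.cos (Real.pi / q)); 0, 1]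

/-- unscaled companion of `pMat` -/
def uM (q : ℕ) (x : ℝ) : Matrix (Fin 2) (Fin 2) ℝ :=
  !![sf q x, sf q (x + 1); sf q (x - 1), sf q x]

lemma pMat_u (k : ℤ) : pMat q k = (sf q 1)⁻¹ • uM q (k : ℝ) := by
  rw [pMat, uM, sf_one]
  rfl

lemma SM_SM : SM * SM = -1 := by
  ext i j
  fin_cases i <;> fin_cases j <;>
    simp [SM, Matrix.mul_apply, Fin.sum_univ_two, Matrix.one_apply]

lemma TMinv_TM : TMinv q * TM q = 1 := by
  ext i j
  fin_cases i <;> fin_cases j <;>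
    simp [TM, TMinv, Matrix.mul_apply, Fin.sum_univ_two, Matrix.one_apply]

lemma TM_TMinv : TM q * TMinv q = 1 := by
  ext i j
  fin_cases i <;> fin_cases j <;>
    simp [TM, TMinv, Matrix.mul_apply, Fin.sum_univ_two, Matrix.one_apply]

lemma TSu (x : ℝ) : TM q * SM * uM q x = - uM q (x + 1) := by
  have hxx : x + 1 - 1 = x := by ring
  ext i j
  fin_cases i <;> fin_cases j <;>
    simp [uM, TM, SM, Matrix.mul_apply, Fin.sum_univ_two, hxx] <;>
    first
      | linear_combination sf_rec (q := q) x
      | linear_combination sf_rec (q := q) (x + 1) - congrArg (sf q) hxx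

lemma u0 : uM q 0 = sf q 1 • SM := by
  ext i j
  fin_cases i <;> fin_cases j <;>
    simp [uM, SM, sf_zero, zero_sub, zero_add, sf_neg]

lemma u1 : uM q 1 = sf q 1 • TM q := by
  have h := sf_rec (q := q) 1
  rw [sub_self, sf_zero, sub_zero] at h
  ext i j
  fin_cases i <;> fin_cases j <;>
    simp [uM, TM, sf_zero, sub_self, h] <;> ring

lemma uq (hq : 3 ≤ q) : uM q q = (-(sf q 1)) • SM := by
  have h1 := sf_q_add hq 1
  have h2 := sf_q_sub hq 1
  ext i j
  fin_cases i <;> fin_cases j <;>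
    simp [uM, SM, sf_q hq, h1, h2]

lemma p0 (hq : 3 ≤ q) : pMat q 0 = SM := by
  rw [pMat_u]
  push_cast
  rw [u0, inv_smul_smul₀ (ne_of_gt (sf1_pos hq))]

lemma p1 (hq : 3 ≤ q) : pMat q 1 = TM q := by
  rw [pMat_u]
  push_cast
  rw [u1, inv_smul_smul₀ (ne_of_gt (sf1_pos hq))]

lemma pq (hq : 3 ≤ q) : pMat q q = - SM := by
  rw [pMat_u]
  push_cast
  rw [uq hq, neg_smul, smul_neg, inv_smul_smul₀ (ne_of_gt (sf1_pos hq))]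

lemma TSp (k : ℤ) : TM q * SM * pMat q k = - pMat q (k + 1) := by
  rw [pMat_u k, pMat_u (k + 1)]
  push_cast
  rw [Matrix.mul_smul, TSu, smul_neg]


lemma S_negS : SM * (-SM) = 1 := by
  rw [mul_neg, SM_SM, neg_neg]

lemma negS_S : (-SM) * SM = 1 := by
  rw [neg_mul, SM_SM, neg_neg]

lemma Tinv_p (k : ℤ) : TMinv q * pMat q (k + 1) = -(SM * pMat q k) := by
  have h := congrArg (TMinv q * ·) (TSp (q := q) k)
  rw [mul_neg, ← mul_assoc, ← mul_assoc, TMinv_TM, one_mul] at h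
  have h2 := congrArg Neg.neg h
  rw [neg_neg] at h2
  exact h2.symm

lemma Tinv_S (hq : 3 ≤ q) : TMinv q * SM = SM * pMat q ((q : ℤ) - 1) := by
  have h := Tinv_p (q := q) ((q : ℤ) - 1)
  rw [sub_add_cancel, pq hq, mul_neg] at h
  exact neg_inj.mp h

lemma Tinv_eq (hq : 3 ≤ q) : TMinv q = -(SM * pMat q ((q : ℤ) - 1) * SM) := by
  have h := congrArg (· * SM) (Tinv_S (q := q) hq)
  rw [mul_assoc, SM_SM, mul_neg_one] at h
  have h2 := congrArg Neg.neg h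
  rw [neg_neg] at h2
  exact h2

lemma det_u (x : ℝ) : (uM q x).det = sf q 1 ^ 2 := by
  have h := sf_sq (q := q) x
  rw [Matrix.det_fin_two]
  simp [uM]
  nlinarith [h]

lemma det_p (hq : 3 ≤ q) (k : ℤ) : (pMat q k).det = 1 := by
  rw [pMat_u, Matrix.det_smul, det_u]
  have hs := sf1_pos (q := q) hq
  simp only [Fintype.card_fin]
  field_simp

/-- entrywise nonneg with determinant one -/
def Good (m : Matrix (Fin 2) (Fin 2) ℝ) : Prop := (∀ i j, 0 ≤ m i j) ∧ m.det = 1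

lemma good_one : Good (1 : Matrix (Fin 2) (Fin 2) ℝ) := by
  constructor
  · intro i j
    fin_cases i <;> fin_cases j <;> simp [Matrix.one_apply]
  · simp

lemma Good.d00 {m : Matrix (Fin 2) (Fin 2) ℝ} (h : Good m) : 0 < m 0 0 ∧ 0 < m 1 1 := by
  obtain ⟨hn, hd⟩ := h
  rw [Matrix.det_fin_two] at hd
  have h1 : 0 < m 0 0 * m 1 1 := by nlinarith [hn 0 1, hn 1 0]
  constructor
  · rcases lt_or_eq_of_le (hn 0 0) with h | h
    · exact h
    · exfalso; rw [← h, zero_mul] at h1; exact lt_irrefl _ h1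
  · rcases lt_or_eq_of_le (hn 1 1) with h | h
    · exact h
    · exfalso; rw [← h, mul_zero] at h1; exact lt_irrefl _ h1

lemma Good.mul {a b : Matrix (Fin 2) (Fin 2) ℝ} (ha : Good a) (hb : Good b) : Good (a * b) := by
  constructor
  · intro i j
    rw [Matrix.mul_apply, Fin.sum_univ_two]
    have := ha.1 i 0; have := ha.1 i 1; have := hb.1 0 j; have := hb.1 1 j
    positivity
  · rw [Matrix.det_mul, ha.2, hb.2, one_mul]

lemma pMat_entry (k : ℤ) :
    pMat q k 0 0 = (sf q 1)⁻¹ * sf q (k : ℝ) ∧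
    pMat q k 0 1 = (sf q 1)⁻¹ * sf q ((k : ℝ) + 1) ∧
    pMat q k 1 0 = (sf q 1)⁻¹ * sf q ((k : ℝ) - 1) ∧
    pMat q k 1 1 = (sf q 1)⁻¹ * sf q (k : ℝ) := by
  rw [pMat_u]
  simp [uM]

lemma good_p (hq : 3 ≤ q) {k : ℕ} (h1 : 1 ≤ k) (h2 : k ≤ q - 1) : Good (pMat q (k : ℤ)) := by
  have hq0 : 0 < q := by omega
  have hkR : (1:ℝ) ≤ (k:ℝ) := by exact_mod_cast h1
  have hkR2 : (k:ℝ) ≤ (q:ℝ) - 1 := by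
    have hk1 : k + 1 ≤ q := by omega
    have : ((k:ℝ) + 1) ≤ (q:ℝ) := by exact_mod_cast hk1
    linarith
  have hs := sf1_pos (q := q) hq
  have hsi : 0 ≤ (sf q 1)⁻¹ := le_of_lt (inv_pos.mpr hs)
  constructor
  · intro i j
    have n1 : 0 ≤ sf q (k:ℝ) := sf_nonneg hq (by linarith) (by linarith)
    have n2 : 0 ≤ sf q ((k:ℝ) + 1) := sf_nonneg hq (by linarith) (by linarith)
    have n3 : 0 ≤ sf q ((k:ℝ) - 1) := sf_nonneg hq (by linarith) (by linarith)
    rw [pMat_u]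
    push_cast
    fin_cases i <;> fin_cases j <;>
      simp [uM] <;>
      first
        | exact mul_nonneg hsi n1
        | exact mul_nonneg hsi n2
        | exact mul_nonneg hsi n3
  · exact det_p hq _

def prodP (q : ℕ) (L : List ℕ) : Matrix (Fin 2) (Fin 2) ℝ :=
  (L.map (fun k => pMat q (k : ℤ))).prod

lemma prodP_nil : prodP q [] = 1 := rfl

lemma prodP_cons (k : ℕ) (L : List ℕ) :
    prodP q (k :: L) = pMat q (k : ℤ) * prodP q L := by
  simp [prodP]

def Vld (q : ℕ) (L : List ℕ) : Prop := ∀ k ∈ L, 1 ≤ k ∧ k ≤ q - 1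

lemma good_prodP (hq : 3 ≤ q) {L : List ℕ} (hL : Vld q L) : Good (prodP q L) := by
  induction L with
  | nil => exact good_one
  | cons k L ih =>
      rw [prodP_cons]
      have hk := hL k (by simp)
      exact (good_p hq hk.1 hk.2).mul (ih (fun j hj => hL j (by simp [hj])))


lemma prodP_off (hq : 3 ≤ q) {L : List ℕ} (hL : Vld q L) (hne : L ≠ []) :
    0 < prodP q L 0 1 ∨ 0 < prodP q L 1 0 := by
  obtain ⟨k, L', rfl⟩ : ∃ k L', L = k :: L' := by
    cases L with
    | nil => exact absurd rfl hne
    | cons a b => exact ⟨a, b, rfl⟩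
  have hk := hL k (by simp)
  have hL' : Vld q L' := fun j hj => hL j (by simp [hj])
  have hG := good_prodP hq hL'
  have hd := hG.d00
  have hs := sf1_pos (q := q) hq
  have hsi : 0 < (sf q 1)⁻¹ := inv_pos.mpr hs
  obtain ⟨e00, e01, e10, e11⟩ := pMat_entry (q := q) (k := (k:ℤ))
  push_cast at e00 e01 e10 e11
  have hgp := good_p hq hk.1 hk.2
  rw [prodP_cons]
  rcases Nat.lt_or_ge k (q - 1) with hlt | hge
  · left
    have hpos : 0 < sf q ((k:ℝ) + 1) := by
      apply sf_pos hq
      · have : (0:ℝ) ≤ (k:ℝ) := Nat.cast_nonneg k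
        linarith
      · have h2 : k + 1 + 1 ≤ q := by omega
        have : ((k:ℝ) + 1) + 1 ≤ (q:ℝ) := by exact_mod_cast h2
        linarith
    rw [Matrix.mul_apply, Fin.sum_univ_two, e00, e01]
    have t1 : 0 ≤ (sf q 1)⁻¹ * sf q (k:ℝ) * prodP q L' 0 1 := by
      have := hgp.1 0 0
      rw [e00] at this
      exact mul_nonneg this (hG.1 0 1)
    have t2 : 0 < (sf q 1)⁻¹ * sf q ((k:ℝ) + 1) * prodP q L' 1 1 :=
      mul_pos (mul_pos hsi hpos) hd.2
    linarith
  · right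
    have hkq : k = q - 1 := le_antisymm hk.2 hge
    have hpos : 0 < sf q ((k:ℝ) - 1) := by
      apply sf_pos hq
      · have h2 : 2 ≤ k := by omega
        have : (2:ℝ) ≤ (k:ℝ) ∨ k = 1 ∨ k = 0 := by
          rcases Nat.lt_or_ge k 2 with h | h
          · interval_cases k <;> simp
          · left; exact_mod_cast h
        rcases this with h | h | h
        · linarith
        · omega
        · omega
      · have h2 : k ≤ q := by omega
        have : (k:ℝ) ≤ (q:ℝ) := by exact_mod_cast h2
        linarith
    rw [Matrix.mul_apply, Fin.sum_univ_two, e10, e11]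
    have t1 : 0 < (sf q 1)⁻¹ * sf q ((k:ℝ) - 1) * prodP q L' 0 0 :=
      mul_pos (mul_pos hsi hpos) hd.1
    have t2 : 0 ≤ (sf q 1)⁻¹ * sf q (k:ℝ) * prodP q L' 1 0 := by
      have := hgp.1 1 1
      rw [e11] at this
      exact mul_nonneg this (hG.1 1 0)
    linarith

lemma sf_mono_prod (hq : 3 ≤ q) {j k : ℕ} (h1 : 1 ≤ j) (hjk : j < k) (hk2 : k ≤ q - 1) :
    sf q (j:ℝ) * sf q (k:ℝ) ≤ sf q ((j:ℝ) + 1) * sf q ((k:ℝ) - 1) := by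
  have hp1 := sf_prod (q := q) (j:ℝ) (k:ℝ)
  have hp2 := sf_prod (q := q) ((j:ℝ) + 1) ((k:ℝ) - 1)
  have ea : ((j:ℝ) + 1 - ((k:ℝ) - 1)) * Real.pi / q = -(((k:ℝ) - (j:ℝ) - 2) * Real.pi / q) := by ring
  have eb : ((j:ℝ) + 1 + ((k:ℝ) - 1)) * Real.pi / q = ((j:ℝ) + (k:ℝ)) * Real.pi / q := by ring
  have ec : ((j:ℝ) - (k:ℝ)) * Real.pi / q = -(((k:ℝ) - (j:ℝ)) * Real.pi / q) := by ring
  rw [ea, eb, Real.cos_neg] at hp2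
  rw [ec, Real.cos_neg] at hp1
  -- reduce to cosine comparison
  set d : ℝ := (k:ℝ) - (j:ℝ) with hd
  have hd1 : 1 ≤ d := by
    have : (j:ℝ) + 1 ≤ (k:ℝ) := by exact_mod_cast hjk
    simp [hd]; linarith
  have hdq : d ≤ (q:ℝ) - 2 := by
    have h2 : k ≤ q - 1 := hk2
    have h3 : (k:ℝ) ≤ (q:ℝ) - 1 := by
      have : k + 1 ≤ q := by omega
      have : ((k:ℝ) + 1) ≤ (q:ℝ) := by exact_mod_cast this
      linarith
    have : (1:ℝ) ≤ (j:ℝ) := by exact_mod_cast h1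
    simp [hd]; linarith
  have hqpos : (0:ℝ) < q := q_pos hq
  have hpi := Real.pi_pos
  have key : Real.cos (d * Real.pi / q) ≤ Real.cos ((d - 2) * Real.pi / q) := by
    rcases le_total 2 d with h2d | h2d
    · apply Real.cos_le_cos_of_nonneg_of_le_pi
      · have h0 : (0:ℝ) ≤ d - 2 := by linarith
        positivity
      · rw [div_le_iff₀ hqpos]
        nlinarith
      · gcongr
        linarith
    · have e3 : (d - 2) * Real.pi / q = -((2 - d) * Real.pi / q) := by ring
      rw [e3, Real.cos_neg]
      apply Real.cos_le_cos_of_nonneg_of_le_pi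
      · have h0 : (0:ℝ) ≤ 2 - d := by linarith
        positivity
      · rw [div_le_iff₀ hqpos]
        nlinarith
      · gcongr
        linarith
  nlinarith [key, hp1, hp2]


lemma head_lt (hq : 3 ≤ q) {j k : ℕ} (hj1 : 1 ≤ j) (hjk : j < k) (hk2 : k ≤ q - 1)
    {X Y : Matrix (Fin 2) (Fin 2) ℝ} (hX : Good X) (hY : Good Y)
    (heq : pMat q (j : ℤ) * X = pMat q (k : ℤ) * Y) : False := by
  have hj2 : j ≤ q - 1 := by omega
  have hk1 : 1 ≤ k := by omega
  have hs := sf1_pos (q := q) hq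
  have hinv : (sf q 1)⁻¹ * sf q 1 = 1 := inv_mul_cancel₀ (ne_of_gt hs)
  obtain ⟨j00, j01, j10, j11⟩ := pMat_entry (q := q) (k := (j:ℤ))
  obtain ⟨k00, k01, k10, k11⟩ := pMat_entry (q := q) (k := (k:ℤ))
  push_cast at j00 j01 j10 j11 k00 k01 k10 k11
  set M := pMat q (j : ℤ) * X with hM
  have hGM : Good M := (good_p hq hj1 hj2).mul hX
  -- entries of M from the j side
  have m01 : M 0 1 = (sf q 1)⁻¹ * sf q (j:ℝ) * X 0 1 + (sf q 1)⁻¹ * sf q ((j:ℝ) + 1) * X 1 1 := by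
    rw [hM, Matrix.mul_apply, Fin.sum_univ_two, j00, j01]
  have m11 : M 1 1 = (sf q 1)⁻¹ * sf q ((j:ℝ) - 1) * X 0 1 + (sf q 1)⁻¹ * sf q (j:ℝ) * X 1 1 := by
    rw [hM, Matrix.mul_apply, Fin.sum_univ_two, j10, j11]
  have m10 : M 1 0 = (sf q 1)⁻¹ * sf q ((k:ℝ) - 1) * Y 0 0 + (sf q 1)⁻¹ * sf q (k:ℝ) * Y 1 0 := by
    rw [heq, Matrix.mul_apply, Fin.sum_univ_two, k10, k11]
  have m00 : M 0 0 = (sf q 1)⁻¹ * sf q (k:ℝ) * Y 0 0 + (sf q 1)⁻¹ * sf q ((k:ℝ) + 1) * Y 1 0 := by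
    rw [heq, Matrix.mul_apply, Fin.sum_univ_two, k00, k01]
  have e1 : M 0 1 * sf q (j:ℝ) - M 1 1 * sf q ((j:ℝ) + 1) = X 0 1 * sf q 1 := by
    rw [m01, m11]
    linear_combination (-((sf q 1)⁻¹ * X 0 1)) * sf_sq (q := q) (j:ℝ) + (X 0 1 * sf q 1) * hinv
  have e2 : M 1 0 * sf q (k:ℝ) - M 0 0 * sf q ((k:ℝ) - 1) = Y 1 0 * sf q 1 := by
    rw [m10, m00]
    linear_combination (-((sf q 1)⁻¹ * Y 1 0)) * sf_sq (q := q) (k:ℝ) + (Y 1 0 * sf q 1) * hinv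
  -- positivity of the relevant sines
  have hjR : (1:ℝ) ≤ (j:ℝ) := by exact_mod_cast hj1
  have hkR : (j:ℝ) + 1 ≤ (k:ℝ) := by exact_mod_cast hjk
  have hkq : (k:ℝ) + 1 ≤ (q:ℝ) := by
    have : k + 1 ≤ q := by omega
    exact_mod_cast this
  have psj : 0 < sf q (j:ℝ) := sf_pos hq (by linarith) (by linarith)
  have psj1 : 0 < sf q ((j:ℝ) + 1) := sf_pos hq (by linarith) (by linarith)
  have psk : 0 < sf q (k:ℝ) := sf_pos hq (by linarith) (by linarith)
  have psk1 : 0 < sf q ((k:ℝ) - 1) := sf_pos hq (by linarith) (by linarith)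
  -- inequalities
  have hBD : M 1 1 * sf q ((j:ℝ) + 1) ≤ M 0 1 * sf q (j:ℝ) := by
    linarith [e1, mul_nonneg (hX.1 0 1) (le_of_lt hs)]
  have hCA : M 0 0 * sf q ((k:ℝ) - 1) ≤ M 1 0 * sf q (k:ℝ) := by
    linarith [e2, mul_nonneg (hY.1 1 0) (le_of_lt hs)]
  have hd := hGM.d00
  have hdet : M 0 0 * M 1 1 - M 0 1 * M 1 0 = 1 := by
    have := hGM.2
    rwa [Matrix.det_fin_two] at this
  have hmono := sf_mono_prod hq hj1 hjk hk2
  have h1 : M 1 1 * sf q ((j:ℝ) + 1) * (M 0 0 * sf q ((k:ℝ) - 1)) ≤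
      M 0 1 * sf q (j:ℝ) * (M 1 0 * sf q (k:ℝ)) := by
    apply mul_le_mul hBD hCA
    · exact mul_nonneg (le_of_lt hd.1) (le_of_lt psk1)
    · calc (0:ℝ) ≤ M 1 1 * sf q ((j:ℝ) + 1) := mul_nonneg (le_of_lt hd.2) (le_of_lt psj1)
        _ ≤ _ := hBD
  have h2 : M 0 0 * M 1 1 * (sf q (j:ℝ) * sf q (k:ℝ)) ≤
      M 0 0 * M 1 1 * (sf q ((j:ℝ) + 1) * sf q ((k:ℝ) - 1)) :=
    mul_le_mul_of_nonneg_left hmono (mul_nonneg (le_of_lt hd.1) (le_of_lt hd.2))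
  have h3 : (M 0 0 * M 1 1 - M 0 1 * M 1 0) * (sf q (j:ℝ) * sf q (k:ℝ)) =
      sf q (j:ℝ) * sf q (k:ℝ) := by rw [hdet]; ring
  linarith [mul_pos psj psk, h1, h2, h3]

lemma head_eq (hq : 3 ≤ q) {j k : ℕ} (hj1 : 1 ≤ j) (hj2 : j ≤ q - 1) (hk1 : 1 ≤ k)
    (hk2 : k ≤ q - 1) {X Y : Matrix (Fin 2) (Fin 2) ℝ} (hX : Good X) (hY : Good Y)
    (heq : pMat q (j : ℤ) * X = pMat q (k : ℤ) * Y) : j = k := by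
  rcases lt_trichotomy j k with h | h | h
  · exact absurd (head_lt hq hj1 h hk2 hX hY heq) (by simp)
  · exact h
  · exact absurd (head_lt hq hk1 h hj2 hY hX heq.symm) (by simp)

lemma prodP_inj (hq : 3 ≤ q) : ∀ L1 : List ℕ, ∀ L2 : List ℕ, Vld q L1 → Vld q L2 →
    prodP q L1 = prodP q L2 → L1 = L2 := by
  intro L1
  induction L1 with
  | nil =>
      intro L2 h1 h2 heq
      cases L2 with
      | nil => rfl
      | cons k L2' =>
          exfalso
          rcases prodP_off hq h2 (by simp) with h | h <;>
            rw [← heq, prodP_nil] at h <;> simp [Matrix.one_apply] at h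
  | cons j L1' ih =>
      intro L2 h1 h2 heq
      cases L2 with
      | nil =>
          exfalso
          rcases prodP_off hq h1 (by simp) with h | h <;>
            rw [heq, prodP_nil] at h <;> simp [Matrix.one_apply] at h
      | cons k L2' =>
          have hj := h1 j (by simp)
          have hk := h2 k (by simp)
          have hL1' : Vld q L1' := fun a ha => h1 a (by simp [ha])
          have hL2' : Vld q L2' := fun a ha => h2 a (by simp [ha])
          rw [prodP_cons, prodP_cons] at heq
          have hjk : j = k :=
            head_eq hq hj.1 hj.2 hk.1 hk.2 (good_prodP hq hL1') (good_prodP hq hL2') heq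
          subst hjk
          have hdet : IsUnit (pMat q (j:ℤ)).det := by
            rw [det_p hq]; exact isUnit_one
          have : Invertible (pMat q (j:ℤ)) := Matrix.invertibleOfIsUnitDet _ hdet
          have htail : prodP q L1' = prodP q L2' := by
            have h2' := congrArg (fun m => (pMat q (j:ℤ))⁻¹ * m) heq
            simpa [← mul_assoc, Matrix.inv_mul_of_invertible] using h2'
          rw [ih L2' hL1' hL2' htail]


def sb (b : Bool) : Matrix (Fin 2) (Fin 2) ℝ := if b then SM else 1

@[simp] lemma sb_true : sb true = SM := rfl
@[simp] lemma sb_false : sb false = 1 := rfl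

/-- normal form predicate -/
def NF (q : ℕ) (m : Matrix (Fin 2) (Fin 2) ℝ) : Prop :=
  ∃ (e : ℝ) (a b : Bool) (L : List ℕ), (e = 1 ∨ e = -1) ∧ Vld q L ∧
    m = e • (sb a * prodP q L * sb b)

lemma neg_sign {e : ℝ} (he : e = 1 ∨ e = -1) : -e = 1 ∨ -e = -1 := by
  rcases he with h | h <;> simp [h]

lemma NF_one : NF q 1 := by
  refine ⟨1, false, false, [], Or.inl rfl, fun k hk => absurd hk List.not_mem_nil, ?_⟩
  simp [prodP_nil]

lemma NF_neg {m : Matrix (Fin 2) (Fin 2) ℝ} (h : NF q m) : NF q (-m) := by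
  obtain ⟨e, a, b, L, he, hL, rfl⟩ := h
  exact ⟨-e, a, b, L, neg_sign he, hL, by rw [neg_smul]⟩

lemma Tinv_p1 (hq : 3 ≤ q) : TMinv q * pMat q 1 = 1 := by
  have h := Tinv_p (q := q) 0
  rw [zero_add, p0 hq] at h
  rw [h, SM_SM, neg_neg]

lemma NF_S {m : Matrix (Fin 2) (Fin 2) ℝ} (h : NF q m) : NF q (SM * m) := by
  obtain ⟨e, a, b, L, he, hL, rfl⟩ := h
  rw [Matrix.mul_smul]
  cases a with
  | false =>
      refine ⟨e, true, b, L, he, hL, ?_⟩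
      simp only [sb_true, sb_false, one_mul, ← mul_assoc]
  | true =>
      refine ⟨-e, false, b, L, neg_sign he, hL, ?_⟩
      simp only [sb_true, sb_false, one_mul, ← mul_assoc]
      rw [SM_SM]
      simp only [neg_one_mul, neg_mul, smul_neg, neg_smul, one_mul]

lemma NF_negS {m : Matrix (Fin 2) (Fin 2) ℝ} (h : NF q m) : NF q ((-SM) * m) := by
  rw [neg_mul]
  exact NF_neg (NF_S h)

lemma NF_T (hq : 3 ≤ q) {m : Matrix (Fin 2) (Fin 2) ℝ} (h : NF q m) : NF q (TM q * m) := by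
  obtain ⟨e, a, b, L, he, hL, rfl⟩ := h
  rw [Matrix.mul_smul]
  cases a with
  | false =>
      refine ⟨e, false, b, (1 :: L), he, ?_, ?_⟩
      · intro k hk
        rcases List.mem_cons.mp hk with h | h
        · omega
        · exact hL k h
      · simp only [sb_true, sb_false, prodP_cons, prodP_nil, one_mul, mul_one, ← mul_assoc]
        rw [Nat.cast_one, p1 hq]
  | true =>
      cases L with
      | nil =>
          cases b with
          | false =>
              refine ⟨e, false, true, [1], he, ?_, ?_⟩
              · intro k hk; simp at hk; omega
              · simp only [sb_true, sb_false, prodP_cons, prodP_nil, one_mul, mul_one,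
                  ← mul_assoc]
                rw [Nat.cast_one, p1 hq]
          | true =>
              refine ⟨-e, false, false, [1], neg_sign he, ?_, ?_⟩
              · intro k hk; simp at hk; omega
              · simp only [sb_true, sb_false, prodP_cons, prodP_nil, one_mul, mul_one,
                  ← mul_assoc]
                rw [mul_assoc, SM_SM, mul_neg_one, Nat.cast_one, p1 hq]
                simp only [smul_neg, neg_smul]
      | cons k L' =>
          have hk := hL k (by simp)
          have hL' : Vld q L' := fun a ha => hL a (by simp [ha])
          rcases Nat.lt_or_ge k (q - 1) with hlt | hge
          · refine ⟨-e, false, b, ((k+1) :: L'), neg_sign he, ?_, ?_⟩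
            · intro a ha
              rcases List.mem_cons.mp ha with h | h
              · omega
              · exact hL' a h
            · simp only [sb_true, sb_false, prodP_cons, prodP_nil, one_mul, mul_one,
                ← mul_assoc]
              rw [TSp]
              push_cast
              simp only [neg_mul, smul_neg, neg_smul]
          · have hkq : k = q - 1 := le_antisymm hk.2 hge
            refine ⟨e, true, b, L', he, hL', ?_⟩
            simp only [sb_true, sb_false, prodP_cons, prodP_nil, one_mul, mul_one, ← mul_assoc]
            rw [TSp]
            have hcq : ((k:ℤ) + 1) = (q : ℤ) := by omega
            rw [hcq, pq hq, neg_neg]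

lemma NF_Tinv (hq : 3 ≤ q) {m : Matrix (Fin 2) (Fin 2) ℝ} (h : NF q m) :
    NF q (TMinv q * m) := by
  obtain ⟨e, a, b, L, he, hL, rfl⟩ := h
  rw [Matrix.mul_smul]
  have hcast : ((q - 1 : ℕ) : ℤ) = (q : ℤ) - 1 := by omega
  cases a with
  | true =>
      refine ⟨e, true, b, ((q-1) :: L), he, ?_, ?_⟩
      · intro a ha
        rcases List.mem_cons.mp ha with h | h
        · omega
        · exact hL a h
      · simp only [sb_true, sb_false, prodP_cons, prodP_nil, one_mul, mul_one, ← mul_assoc]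
        rw [hcast, Tinv_S hq]
  | false =>
      cases L with
      | nil =>
          cases b with
          | false =>
              refine ⟨-e, true, true, [q-1], neg_sign he, ?_, ?_⟩
              · intro a ha; simp at ha; omega
              · simp only [sb_true, sb_false, prodP_cons, prodP_nil, one_mul, mul_one,
                  ← mul_assoc]
                rw [hcast, Tinv_eq hq]
                simp only [smul_neg, neg_smul]
          | true =>
              refine ⟨e, true, false, [q-1], he, ?_, ?_⟩
              · intro a ha; simp at ha; omega
              · simp only [sb_true, sb_false, prodP_cons, prodP_nil, one_mul, mul_one,
                  ← mul_assoc]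
                rw [hcast, Tinv_S hq]
      | cons k L' =>
          have hk := hL k (by simp)
          have hL' : Vld q L' := fun a ha => hL a (by simp [ha])
          have hTp : TMinv q * pMat q (k : ℤ) = -(SM * pMat q ((k : ℤ) - 1)) := by
            have := Tinv_p (q := q) ((k : ℤ) - 1)
            rwa [sub_add_cancel] at this
          rcases Nat.lt_or_ge 1 k with hgt | hle
          · refine ⟨-e, true, b, ((k-1) :: L'), neg_sign he, ?_, ?_⟩
            · intro a ha
              rcases List.mem_cons.mp ha with h | h
              · omega
              · exact hL' a h
            · simp only [sb_true, sb_false, prodP_cons, prodP_nil, one_mul, mul_one,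
                ← mul_assoc]
              rw [hTp, show ((k - 1 : ℕ) : ℤ) = (k : ℤ) - 1 by omega]
              simp only [neg_mul, smul_neg, neg_smul]
          · have hk1 : k = 1 := by omega
            subst hk1
            refine ⟨e, false, b, L', he, hL', ?_⟩
            simp only [sb_true, sb_false, prodP_cons, prodP_nil, one_mul, mul_one, ← mul_assoc]
            rw [Nat.cast_one, Tinv_p1 hq, one_mul]


lemma mul_SM (X : Matrix (Fin 2) (Fin 2) ℝ) :
    X * SM = !![-(X 0 1), X 0 0; -(X 1 1), X 1 0] := by
  ext i j
  fin_cases i <;> fin_cases j <;>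
    simp [SM, Matrix.mul_apply, Fin.sum_univ_two]

lemma SM_mul (X : Matrix (Fin 2) (Fin 2) ℝ) :
    SM * X = !![X 1 0, X 1 1; -(X 0 0), -(X 0 1)] := by
  ext i j
  fin_cases i <;> fin_cases j <;>
    simp [SM, Matrix.mul_apply, Fin.sum_univ_two]

lemma exists_decomp (hq : 3 ≤ q) {m : Matrix (Fin 2) (Fin 2) ℝ} (hNF : NF q m)
    (hp1 : 0 ≤ m 0 0) (hp2 : m 0 1 < 0) (hp3 : 0 < m 1 0) (hp4 : m 1 1 ≤ 0) :
    ∃ L, Vld q L ∧ m = -(prodP q L * SM) := by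
  obtain ⟨e, a, b, L, he, hL, rfl⟩ := hNF
  have hG := good_prodP hq hL
  have hd := hG.d00
  have hoff := hG.1
  cases a with
  | false =>
      cases b with
      | false =>
          -- m = e • P : impossible
          exfalso
          simp only [sb_false, one_mul, mul_one] at hp3 hp4
          rcases he with rfl | rfl
          · rw [Matrix.smul_apply, one_smul] at hp4
            linarith [hd.2]
          · rw [Matrix.smul_apply] at hp3
            have := hoff 1 0
            simp at hp3
            linarith
      | true =>
          -- m = e • (P * SM), must have e = -1
          simp only [sb_false, sb_true, one_mul] at *
          rcases he with rfl | rfl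
          · exfalso
            rw [Matrix.smul_apply, one_smul, mul_SM] at hp3
            simp at hp3
            linarith [hd.2]
          · exact ⟨L, hL, by rw [neg_smul, one_smul]⟩
  | true =>
      cases b with
      | true =>
          -- m = e • (SM * P * SM) : impossible
          exfalso
          simp only [sb_true] at hp1 hp3
          rw [mul_assoc, Matrix.smul_apply, SM_mul, mul_SM] at hp1 hp3
          simp at hp1 hp3
          rcases he with rfl | rfl
          · linarith [hd.2, hoff 0 1, hp1, hp3]
          · linarith [hd.2, hoff 0 1, hp1, hp3]
      | false =>
          -- m = e • (SM * P); forces e = -1, P = 1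
          simp only [sb_true, sb_false, mul_one] at *
          rcases he with rfl | rfl
          · exfalso
            rw [Matrix.smul_apply, one_smul, SM_mul] at hp3
            simp at hp3
            linarith [hd.1]
          · have h00' : 0 ≤ -(prodP q L 1 0) := by
              have := hp1
              rw [Matrix.smul_apply, SM_mul] at this
              simpa using this
            have h11' : prodP q L 0 1 ≤ 0 := by
              have := hp4
              rw [Matrix.smul_apply, SM_mul] at this
              simpa using this
            have hLnil : L = [] := by
              by_contra hne
              rcases prodP_off hq hL hne with h | h
              · linarith
              · linarith [h00']
            subst hLnil
            refine ⟨[], fun k hk => absurd hk List.not_mem_nil, ?_⟩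
            rw [prodP_nil, mul_one, one_mul]
            ext i j
            fin_cases i <;> fin_cases j <;> simp [SM]


lemma Smat_inv_coe : ((Smat⁻¹ : SL2) : Matrix (Fin 2) (Fin 2) ℝ) = -SM := by
  rw [Matrix.SpecialLinearGroup.coe_inv]
  rw [show (Smat : Matrix (Fin 2) (Fin 2) ℝ) = !![0,1;-1,0] from rfl]
  rw [Matrix.adjugate_fin_two]
  ext i j
  fin_cases i <;> fin_cases j <;> simp [SM]

lemma Tmat_inv_coe : (((Tmat q)⁻¹ : SL2) : Matrix (Fin 2) (Fin 2) ℝ) = TMinv q := by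
  rw [Matrix.SpecialLinearGroup.coe_inv]
  rw [show ((Tmat q : SL2) : Matrix (Fin 2) (Fin 2) ℝ)
      = !![1, 2 * Real.cos (Real.pi / q); 0, 1] from rfl]
  rw [Matrix.adjugate_fin_two]
  ext i j
  fin_cases i <;> fin_cases j <;> simp [TMinv]

lemma NF_of_mem (hq : 3 ≤ q) {h : SL2} (hh : h ∈ Hecke q) :
    NF q (h : Matrix (Fin 2) (Fin 2) ℝ) := by
  rw [Hecke] at hh
  induction hh using Subgroup.closure_induction_left with
  | one => exact NF_one
  | mul_left x hx y hy ih =>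
      rw [Matrix.SpecialLinearGroup.coe_mul]
      rcases hx with rfl | rfl
      · exact NF_S ih
      · exact NF_T hq ih
  | inv_mul_cancel x hx y hy ih =>
      rw [Matrix.SpecialLinearGroup.coe_mul]
      rcases hx with rfl | rfl
      · rw [Smat_inv_coe]
        exact NF_negS ih
      · rw [Tmat_inv_coe]
        exact NF_Tinv hq ih

lemma pattern_of {a b c d : ℝ} (hdet : a * d - b * c = 1) (hc : 0 < c) (h0 : 0 ≤ a / c)
    (hbd : d = 0 ∨ a / c < b / d) : 0 ≤ a ∧ b < 0 ∧ d ≤ 0 := by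
  have ha : 0 ≤ a := by
    have := mul_nonneg h0 hc.le
    rwa [div_mul_cancel₀ a (ne_of_gt hc)] at this
  rcases hbd with hd0 | hlt
  · subst hd0
    refine ⟨ha, ?_, le_refl 0⟩
    have hbc : b * c = -1 := by linarith
    nlinarith
  · have hd0 : d ≠ 0 := by
      intro hd0
      rw [hd0] at hlt
      simp at hlt
      exact absurd (lt_of_le_of_lt h0 hlt) (lt_irrefl _)
    have hdneg : d < 0 := by
      by_contra hpos
      push_neg at hpos
      have hdpos : 0 < d := lt_of_le_of_ne hpos (Ne.symm hd0)
      -- then b/d > a/c ≥ 0 with all positive: b*c > a*d contradicts det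
      rw [div_lt_div_iff₀ hc hdpos] at hlt
      nlinarith
    refine ⟨ha, ?_, hdneg.le⟩
    have hbd0 : 0 < b / d := lt_of_le_of_lt h0 hlt
    rcases div_pos_iff.mp hbd0 with ⟨hb, hd⟩ | ⟨hb, hd⟩
    · linarith
    · exact hb

end St12

open St12

/-- if `h ∈ Γ_q` satisfies `h • 0 > h • ∞ ≥ 0` in `ℝ ∪ {∞}`, then there
are unique `ℓ ∈ ℕ₀` and `k₁, …, k_ℓ ∈ {1, …, q−1}` with `h = ±(p_{k₁} ⋯ p_{k_ℓ} · S)`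
(the empty product being the identity matrix). -/
theorem stmt_12 (q : ℕ) (hq : 3 ≤ q) (h : SL2) (hh : h ∈ Hecke q)
    (hord : opLT (mob h ∞) (mob h ((0 : ℝ) : OnePoint ℝ)) ∧
            opLE (((0 : ℝ) : OnePoint ℝ)) (mob h ∞)) :
    ∃! L : List ℕ, (∀ k ∈ L, 1 ≤ k ∧ k ≤ q - 1) ∧
      (h.1 = (L.map (fun k => pMat q (k : ℤ))).prod * Smat.1 ∨
       h.1 = -((L.map (fun k => pMat q (k : ℤ))).prod * Smat.1)) := by
  classical
  obtain ⟨hlt, hle⟩ := hord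
  have hdet : h.1 0 0 * h.1 1 1 - h.1 0 1 * h.1 1 0 = 1 := by
    have := h.2
    rwa [Matrix.det_fin_two] at this
  have hC : h.1 1 0 ≠ 0 := by
    intro h0
    simp only [mob, h0, if_pos rfl] at hlt
    exact hlt
  have hmInf : mob h ∞ = ((h.1 0 0 / h.1 1 0 : ℝ) : OnePoint ℝ) := by
    simp [mob, hC]
  have h0le : 0 ≤ h.1 0 0 / h.1 1 0 := by
    rw [hmInf] at hle
    rcases hle with heq | hlt0
    · exact le_of_eq (OnePoint.coe_eq_coe.mp heq)
    · exact le_of_lt hlt0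
  have hbd : h.1 1 1 = 0 ∨ h.1 0 0 / h.1 1 0 < h.1 0 1 / h.1 1 1 := by
    by_cases hD : h.1 1 1 = 0
    · exact Or.inl hD
    · right
      have hm0 : mob h ((0:ℝ) : OnePoint ℝ) = ((h.1 0 1 / h.1 1 1 : ℝ) : OnePoint ℝ) := by
        simp [mob, hD]
      rw [hmInf, hm0] at hlt
      exact hlt
  -- main decomposition
  have main : ∃ L, Vld q L ∧
      (h.1 = prodP q L * SM ∨ h.1 = -(prodP q L * SM)) := by
    rcases lt_or_gt_of_ne hC with hneg | hpos
    · -- bottom-left negative: work with -h.1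
      have hdet' : (-(h.1 0 0)) * (-(h.1 1 1)) - (-(h.1 0 1)) * (-(h.1 1 0)) = 1 := by
        linarith [hdet]
      have hc' : (0:ℝ) < -(h.1 1 0) := by linarith
      have h0le' : 0 ≤ (-(h.1 0 0)) / (-(h.1 1 0)) := by
        rwa [neg_div_neg_eq]
      have hbd' : -(h.1 1 1) = 0 ∨
          (-(h.1 0 0)) / (-(h.1 1 0)) < (-(h.1 0 1)) / (-(h.1 1 1)) := by
        rcases hbd with h1 | h1
        · left; rw [h1, neg_zero]
        · right; rwa [neg_div_neg_eq, neg_div_neg_eq]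
      obtain ⟨hpa, hpb, hpd⟩ := pattern_of hdet' hc' h0le' hbd'
      have hNF : NF q (-(h.1 : Matrix (Fin 2) (Fin 2) ℝ)) := NF_neg (NF_of_mem hq hh)
      obtain ⟨L, hL, hEq⟩ := exists_decomp hq hNF
        (by rw [Matrix.neg_apply]; exact hpa)
        (by rw [Matrix.neg_apply]; exact hpb)
        (by rw [Matrix.neg_apply]; exact hc')
        (by rw [Matrix.neg_apply]; exact hpd)
      exact ⟨L, hL, Or.inl (neg_inj.mp hEq)⟩
    · have hbd2 : h.1 1 1 = 0 ∨ h.1 0 0 / h.1 1 0 < h.1 0 1 / h.1 1 1 := hbd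
      obtain ⟨hpa, hpb, hpd⟩ := pattern_of hdet hpos h0le hbd2
      obtain ⟨L, hL, hEq⟩ := exists_decomp hq (NF_of_mem hq hh) hpa hpb hpos hpd
      exact ⟨L, hL, Or.inr hEq⟩
  obtain ⟨L, hL, hOr⟩ := main
  refine ⟨L, ⟨hL, ?_⟩, ?_⟩
  · exact hOr
  · intro L' ⟨hv', hor'⟩
    have hPP : prodP q L' = prodP q L := by
      have cancel : ∀ X Y : Matrix (Fin 2) (Fin 2) ℝ, X * SM = Y * SM → X = Y := by
        intro X Y hXY
        have := congrArg (fun M => M * SM) hXY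
        simp only [mul_assoc, SM_SM, mul_neg_one] at this
        exact neg_inj.mp this
      have hc1 : (prodP q L' * SM = prodP q L * SM → prodP q L' = prodP q L) := cancel _ _
      have hgood : 0 < prodP q L 0 0 := (good_prodP hq hL).d00.1
      have hgood' : 0 < prodP q L' 0 0 := (good_prodP hq hv').d00.1
      rcases hor' with h1 | h1 <;> rcases hOr with h2 | h2
      · exact hc1 (h1.symm.trans h2)
      · exfalso
        have h3 : prodP q L' * SM = -(prodP q L * SM) := h1.symm.trans h2
        have h4 : prodP q L' = -(prodP q L) := by
          apply cancel
          rw [h3, neg_mul]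
        have := congrFun (congrFun h4 0) 0
        rw [Matrix.neg_apply] at this
        linarith [this]
      · exfalso
        have h3 : -(prodP q L' * SM) = prodP q L * SM := h1.symm.trans h2
        have h4 : -(prodP q L') = prodP q L := by
          apply cancel
          rw [← h3, neg_mul]
        have := congrFun (congrFun h4 0) 0
        rw [Matrix.neg_apply] at this
        linarith [this]
      · apply hc1
        have h3 : -(prodP q L' * SM) = -(prodP q L * SM) := h1.symm.trans h2
        exact neg_inj.mp h3
    exact prodP_inj hq L' L hv' hL hPP
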